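/- Let Z ⊆ P^n be a nonempty finite set of points over a field, and let d ≥ 1 be an integer such that |Z ∩ L| ≤ d·(dim L) + 1 for all nonempty linear subspaces L ⊆ P^n. Then Z imposes independent conditions on forms of degree d, i.e., dim [Sym(V^*)/I(Z)]_d = |Z|. -/

import Mathlib

open MvPolynomial Module

set_option linter.unusedSectionVars false

open Module Submodule

section Horn
variable {K : Type*} [Field K] {U : Type*} [AddCommGroup U] [Module K U]
  [FiniteDimensional K U] {ι : Type*} [DecidableEq ι]

/-- rank of the image of `u '' t` in `U ⧸ W`. -/
noncomputable def rho (u : ι → U) (W : Submodule K U) (t : Finset ι) : ℕ :=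
  finrank K (span K ((W.mkQ ∘ u) '' ↑t))

lemma rho_add (u : ι → U) (W : Submodule K U) (t : Finset ι) :
    rho u W t + finrank K W = finrank K ↥(span K (u '' ↑t) ⊔ W) := by
  classical
  set X : Submodule K U := span K (u '' ↑t) ⊔ W with hX
  have hWX : W ≤ X := le_sup_right
  have h1 : span K ((W.mkQ ∘ u) '' ↑t) = X.map W.mkQ := by
    rw [Set.image_comp, ← Submodule.map_span, hX, Submodule.map_sup]
    have : W.map W.mkQ = ⊥ := by
      simp [Submodule.map_mkQ_eq_top, eq_bot_iff, Submodule.map_le_iff_le_comap, Submodule.comap_bot, Submodule.ker_mkQ]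
    rw [this, sup_bot_eq]
  have h2 := LinearMap.finrank_range_add_finrank_ker (W.mkQ.comp X.subtype)
  have hr : LinearMap.range (W.mkQ.comp X.subtype) = X.map W.mkQ := by
    rw [LinearMap.range_comp, Submodule.range_subtype]
  have hk : LinearMap.ker (W.mkQ.comp X.subtype) = W.comap X.subtype := by
    rw [LinearMap.ker_comp, Submodule.ker_mkQ]
  rw [hr, hk] at h2
  have hk2 : finrank K ↥(W.comap X.subtype) = finrank K W :=
    (Submodule.comapSubtypeEquivOfLe hWX).finrank_eq
  rw [rho, h1, ← h2, hk2]

/-- linear independence (over the quotient by `W`) of the family `u` on a finset,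
phrased via finite sums of coefficients. -/
def LIndepOn (u : ι → U) (W : Submodule K U) (t : Finset ι) : Prop :=
  ∀ g : ι → K, ∑ x ∈ t, g x • W.mkQ (u x) = 0 → ∀ x ∈ t, g x = 0

lemma lindepOn_empty (u : ι → U) (W : Submodule K U) : LIndepOn u W ∅ := by
  intro g _ x hx; simp at hx

lemma lindepOn_singleton (u : ι → U) {W : Submodule K U} {t : ι} (h : u t ∉ W) :
    LIndepOn u W {t} := by
  intro g hg x hx
  rw [Finset.mem_singleton] at hx
  subst hx
  rw [Finset.sum_singleton, smul_eq_zero] at hg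
  rcases hg with h1 | h1
  · exact h1
  · rw [Submodule.mkQ_apply, Submodule.Quotient.mk_eq_zero] at h1
    exact absurd h1 h

lemma LIndepOn.union {u : ι → U} {W : Submodule K U} {C I J : Finset ι} (hIC : ↑I ⊆ ↑C)
    (hI : LIndepOn u W I) (hJ : LIndepOn u (W ⊔ span K (u '' ↑C)) J) :
    LIndepOn u W (I ∪ J) := by
  classical
  intro g hg x hx
  set W' : Submodule K U := W ⊔ span K (u '' ↑C) with hW'
  have hWW' : W ≤ W' := le_sup_left
  set π : (U ⧸ W) →ₗ[K] (U ⧸ W') := Submodule.mapQ W W' LinearMap.id (by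
    intro y hy; exact hWW' hy) with hπ
  have hπm : ∀ y : U, π (W.mkQ y) = W'.mkQ y := fun y => rfl
  have hmemC : ∀ i ∈ I, W'.mkQ (u i) = 0 := by
    intro i hi
    rw [Submodule.mkQ_apply, Submodule.Quotient.mk_eq_zero]
    exact le_sup_right (α := Submodule K U) (b := span K (u '' ↑C)) (Submodule.subset_span ⟨i, hIC hi, rfl⟩)
  -- first: coefficients on J vanish
  have hgJ : ∀ x ∈ J, g x = 0 := by
    apply hJ
    have := congrArg π hg
    rw [map_sum, map_zero] at this
    simp only [map_smul, hπm] at this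
    have hsplit : ∑ x ∈ I ∪ J, g x • W'.mkQ (u x) = ∑ x ∈ J, g x • W'.mkQ (u x) := by
      rw [Finset.union_comm, Finset.sum_union_eq_left]
      intro i hi hni
      rw [hmemC i hi, smul_zero]
    rwa [hsplit] at this
  have hgI : ∀ x ∈ I, g x = 0 := by
    apply hI
    have hsplit : ∑ x ∈ I ∪ J, g x • W.mkQ (u x) = ∑ x ∈ I, g x • W.mkQ (u x) := by
      rw [Finset.sum_union_eq_left]
      intro i hi hni
      rw [hgJ i hi, zero_smul]
    rwa [hsplit] at hg
  rcases Finset.mem_union.1 hx with h | h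
  · exact hgI x h
  · exact hgJ x h

lemma finrank_sup_singleton_le (X : Submodule K U) (v : U) :
    finrank K ↥(X ⊔ span K {v}) ≤ finrank K X + 1 := by
  have h := Submodule.finrank_sup_add_finrank_inf_eq X (span K {v})
  have h2 : finrank K ↥(span K ({v} : Set U)) ≤ 1 := by
    rcases eq_or_ne v 0 with rfl | hv
    · rw [Submodule.span_zero_singleton]; simp
    · rw [finrank_span_singleton hv]
  omega

lemma finrank_sup_singleton_of_nmem {W : Submodule K U} {v : U} (h : v ∉ W) :
    finrank K ↥(W ⊔ span K {v}) = finrank K W + 1 := by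
  have hlt : W < W ⊔ span K {v} := by
    refine lt_of_le_of_ne le_sup_left ?_
    intro he
    exact h (he ▸ (le_sup_right (α := Submodule K U) (Submodule.mem_span_singleton_self v)))
  have := Submodule.finrank_lt_finrank_of_lt hlt
  have := finrank_sup_singleton_le W v
  omega

lemma rho_mono (u : ι → U) (W : Submodule K U) {a b : Finset ι} (h : a ⊆ b) :
    rho u W a ≤ rho u W b := by
  have ha := rho_add u W a
  have hb := rho_add u W b
  have : finrank K ↥(span K (u '' ↑a) ⊔ W) ≤ finrank K ↥(span K (u '' ↑b) ⊔ W) :=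
    Submodule.finrank_mono (sup_le_sup_right (span_mono (Set.image_mono h)) W)
  omega

lemma rho_insert_le (u : ι → U) (W : Submodule K U) (a : Finset ι) (t : ι) :
    rho u W (insert t a) ≤ rho u W a + 1 := by
  have h1 := rho_add u W (insert t a)
  have h2 := rho_add u W a
  have him : (u '' ↑(insert t a)) = insert (u t) (u '' ↑a) := by
    rw [Finset.coe_insert, Set.image_insert_eq]
  have hsp : span K (u '' ↑(insert t a)) ⊔ W
      = (span K (u '' ↑a) ⊔ W) ⊔ span K {u t} := by
    rw [him, Submodule.span_insert]
    rw [sup_assoc, sup_comm]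
  have h3 := finrank_sup_singleton_le (span K (u '' ↑a) ⊔ W) (u t)
  rw [hsp] at h1
  omega

lemma rho_eq_zero_of_mem {u : ι → U} {W : Submodule K U} {t : ι} (h : u t ∈ W) :
    rho u W {t} = 0 := by
  have h1 := rho_add u W {t}
  have : span K (u '' ↑({t} : Finset ι)) ⊔ W = W := by
    rw [Finset.coe_singleton, Set.image_singleton, sup_eq_right]
    rwa [Submodule.span_singleton_le_iff_mem]
  rw [this] at h1
  omega

lemma nmem_of_rho_pos {u : ι → U} {W : Submodule K U} {t : ι} (h : 1 ≤ rho u W {t}) :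
    u t ∉ W := fun hm => by rw [rho_eq_zero_of_mem hm] at h; omega

/-- contraction identity used in Case 1. -/
lemma rho_contract (u : ι → U) (W : Submodule K U) (A b : Finset ι) :
    rho u (W ⊔ span K (u '' ↑A)) b + rho u W A = rho u W (A ∪ b) := by
  have h1 := rho_add u (W ⊔ span K (u '' ↑A)) b
  have h2 := rho_add u W A
  have h3 := rho_add u W (A ∪ b)
  have hsp : span K (u '' ↑(A ∪ b)) ⊔ W
      = span K (u '' ↑b) ⊔ (W ⊔ span K (u '' ↑A)) := by
    rw [Finset.coe_union, Set.image_union, Submodule.span_union]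
    rw [sup_comm (span K (u '' ↑A)) (span K (u '' ↑b)), sup_assoc, sup_comm (span K (u '' ↑A)) W]
  have h4 : finrank K ↥(span K (u '' ↑A) ⊔ W) = finrank K ↥(W ⊔ span K (u '' ↑A)) := by
    rw [sup_comm]
  rw [hsp] at h3
  omega

/-- single-element contraction identity used in Case 2. -/
lemma rho_contract_singleton {u : ι → U} {W : Submodule K U} {t : ι} (h : u t ∉ W)
    (a : Finset ι) :
    rho u (W ⊔ span K {u t}) a + 1 = rho u W (insert t a) := by
  have := rho_contract u W {t} a
  have him : (u '' ↑({t} : Finset ι)) = {u t} := by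
    rw [Finset.coe_singleton, Set.image_singleton]
  rw [him] at this
  have hsing : rho u W {t} = 1 := by
    have h1 := rho_add u W {t}
    have : span K (u '' ↑({t} : Finset ι)) ⊔ W = W ⊔ span K {u t} := by
      rw [him, sup_comm]
    rw [this, finrank_sup_singleton_of_nmem h] at h1
    omega
  have hins : ({t} : Finset ι) ∪ a = insert t a := by
    ext x; simp
  rw [hins] at this
  omega

lemma horn {d : ℕ} (hd : 0 < d) (u : ι → U) :
    ∀ N (s : Finset ι), s.card ≤ N → ∀ W : Fin d → Submodule K U,
      (∀ a ⊆ s, a.card ≤ ∑ k, rho u (W k) a) →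
      ∃ f : ι → Fin d, ∀ k, LIndepOn u (W k) (s.filter (fun x => f x = k)) := by
  classical
  intro N
  induction N with
  | zero =>
    intro s hs W _
    have hse : s = ∅ := Finset.card_eq_zero.1 (Nat.le_zero.1 hs)
    subst hse
    exact ⟨fun _ => ⟨0, hd⟩, fun k => by simpa using lindepOn_empty u (W k)⟩
  | succ N IH =>
    intro s hcard W hcond
    rcases Finset.eq_empty_or_nonempty s with rfl | hne
    · exact ⟨fun _ => ⟨0, hd⟩, fun k => by simpa using lindepOn_empty u (W k)⟩
    by_cases hcase : ∃ A ⊆ s, A.Nonempty ∧ A ≠ s ∧ ∑ k, rho u (W k) A ≤ A.card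
    · -- Case 1: a tight proper nonempty subset exists
      obtain ⟨A, hAs, hAne, hAneq, hAt⟩ := hcase
      have hA1 : A.card ≤ N := by
        have hlt := Finset.card_lt_card (Finset.ssubset_iff_subset_ne.2 ⟨hAs, hAneq⟩)
        omega
      obtain ⟨fA, hfA⟩ := IH A hA1 W (fun a ha => hcond a (ha.trans hAs))
      set W' : Fin d → Submodule K U := fun k => W k ⊔ span K (u '' ↑A) with hW'
      have hB1 : (s \ A).card ≤ N := by
        have h1 : (s \ A).card = s.card - A.card := Finset.card_sdiff_of_subset hAs
        have := hAne.card_pos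
        omega
      have hcond' : ∀ b ⊆ s \ A, b.card ≤ ∑ k, rho u (W' k) b := by
        intro b hb
        have hbs : A ∪ b ⊆ s := Finset.union_subset hAs (hb.trans (Finset.sdiff_subset))
        have hdisj : Disjoint A b :=
          Finset.disjoint_left.2 fun x hxA hxb => (Finset.mem_sdiff.1 (hb hxb)).2 hxA
        have hcu : (A ∪ b).card = A.card + b.card := Finset.card_union_of_disjoint hdisj
        have hsum : ∑ k, rho u (W' k) b + ∑ k, rho u (W k) A = ∑ k, rho u (W k) (A ∪ b) := by
          rw [← Finset.sum_add_distrib]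
          exact Finset.sum_congr rfl fun k _ => rho_contract u (W k) A b
        have h1 := hcond _ hbs
        omega
      obtain ⟨fB, hfB⟩ := IH (s \ A) hB1 W' hcond'
      refine ⟨fun x => if x ∈ A then fA x else fB x, fun k => ?_⟩
      have hsplit : s.filter (fun x => (if x ∈ A then fA x else fB x) = k)
          = A.filter (fun x => fA x = k) ∪ (s \ A).filter (fun x => fB x = k) := by
        ext x
        simp only [Finset.mem_filter, Finset.mem_union, Finset.mem_sdiff]
        by_cases hxA : x ∈ A
        · simp [hxA, hAs hxA]
        · simp [hxA]
      rw [hsplit]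
      exact LIndepOn.union (C := A)
        (by exact_mod_cast Finset.coe_subset.2 (Finset.filter_subset _ _)) (hfA k) (hfB k)
    · -- Case 2: all proper nonempty subsets are strict
      push_neg at hcase
      obtain ⟨t, hts⟩ := hne
      have hone : 1 ≤ ∑ k, rho u (W k) {t} := by
        have := hcond {t} (Finset.singleton_subset_iff.2 hts)
        simpa using this
      have hk1 : ∃ k, 1 ≤ rho u (W k) {t} := by
        by_contra hc
        push_neg at hc
        have : ∑ k, rho u (W k) {t} = 0 :=
          Finset.sum_eq_zero fun k _ => by have := hc k; omega
        omega
      obtain ⟨k₁, hk₁⟩ := hk1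
      have hnm : u t ∉ W k₁ := nmem_of_rho_pos hk₁
      set W' : Fin d → Submodule K U := Function.update W k₁ (W k₁ ⊔ span K {u t}) with hW'
      have hW'k₁ : W' k₁ = W k₁ ⊔ span K {u t} := by rw [hW', Function.update_self]
      have hW'ne : ∀ k, k ≠ k₁ → W' k = W k := fun k hk => by
        rw [hW', Function.update_of_ne hk]
      have hcond' : ∀ a ⊆ s.erase t, a.card ≤ ∑ k, rho u (W' k) a := by
        intro a ha
        have hta : t ∉ a := fun h => (Finset.mem_erase.1 (ha h)).1 rfl
        have has : a ⊆ s := ha.trans (Finset.erase_subset t s)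
        have hidk : rho u (W' k₁) a + 1 = rho u (W k₁) (insert t a) := by
          rw [hW'k₁]
          exact rho_contract_singleton hnm a
        have hmono : rho u (W k₁) a ≤ rho u (W k₁) (insert t a) :=
          rho_mono u (W k₁) (Finset.subset_insert t a)
        have hup : rho u (W k₁) (insert t a) ≤ rho u (W k₁) a + 1 :=
          rho_insert_le u (W k₁) a t
        have hsum' : ∑ k, rho u (W' k) a
            = rho u (W' k₁) a + ∑ k ∈ Finset.univ \ {k₁}, rho u (W k) a := by
          rw [add_comm, Finset.sum_eq_sum_sdiff_singleton_add (Finset.mem_univ k₁)]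
          congr 1
          refine Finset.sum_congr rfl fun k hk => ?_
          rw [hW'ne k (by simpa using (Finset.mem_sdiff.1 hk).2)]
        have hsum0 : ∑ k, rho u (W k) a
            = rho u (W k₁) a + ∑ k ∈ Finset.univ \ {k₁}, rho u (W k) a := by
          rw [add_comm, Finset.sum_eq_sum_sdiff_singleton_add (Finset.mem_univ k₁)]
        rcases Finset.eq_empty_or_nonempty a with rfl | hane
        · simp
        have hcb := hcond a has
        by_cases hm : rho u (W k₁) (insert t a) = rho u (W k₁) a + 1
        · omega
        · have hstrict : a.card < ∑ k, rho u (W k) a := by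
            refine hcase a has hane ?_
            intro he
            exact hta (he ▸ hts)
          omega
      have hc1 : (s.erase t).card ≤ N := by
        rw [Finset.card_erase_of_mem hts]
        omega
      obtain ⟨f', hf'⟩ := IH (s.erase t) hc1 W' hcond'
      refine ⟨Function.update f' t k₁, fun k => ?_⟩
      by_cases hk : k = k₁
      · subst hk
        have hsplit : s.filter (fun x => Function.update f' t k x = k)
            = {t} ∪ (s.erase t).filter (fun x => f' x = k) := by
          ext x
          simp only [Finset.mem_filter, Finset.mem_union, Finset.mem_singleton,
            Finset.mem_erase]
          by_cases hx : x = t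
          · subst hx
            simp [Function.update_self, hts]
          · simp [Function.update_of_ne hx, hx]
        rw [hsplit]
        refine LIndepOn.union (C := {t}) (by simp) (lindepOn_singleton u hnm) ?_
        have him : u '' ↑({t} : Finset ι) = {u t} := by simp
        rw [him, ← hW'k₁]
        exact hf' k
      · have hsplit : s.filter (fun x => Function.update f' t k₁ x = k)
            = (s.erase t).filter (fun x => f' x = k) := by
          ext x
          simp only [Finset.mem_filter, Finset.mem_erase]
          by_cases hx : x = t
          · subst hx
            simp only [Function.update_self]
            constructor
            · rintro ⟨-, h⟩; exact absurd h.symm hk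
            · rintro ⟨⟨h, -⟩, -⟩; exact absurd rfl h
          · simp [Function.update_of_ne hx, hx]
        rw [hsplit, ← hW'ne k hk]
        exact hf' k

lemma nmem_span_of_lindepOn {u : ι → U} {v : U} (hv : v ≠ 0) {t : Finset ι}
    (h : LIndepOn u (span K {v}) t) : v ∉ span K (u '' ↑t) := by
  intro hmem
  rw [Finsupp.mem_span_image_iff_linearCombination] at hmem
  obtain ⟨l, hl, hlv⟩ := hmem
  have hsupp : l.support ⊆ t := by simpa [Finsupp.mem_supported] using hl
  have hsum : ∑ x ∈ t, l x • u x = v := by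
    rw [← hlv, Finsupp.linearCombination_apply, Finsupp.sum]
    exact (Finset.sum_subset hsupp fun x _ hx => by
      rw [Finsupp.notMem_support_iff.1 hx, zero_smul]).symm
  have hq : ∑ x ∈ t, l x • (span K {v}).mkQ (u x) = 0 := by
    have he : ∀ x ∈ t, l x • (span K {v}).mkQ (u x) = (span K {v}).mkQ (l x • u x) :=
      fun x _ => (map_smul _ _ _).symm
    rw [Finset.sum_congr rfl he, ← map_sum, hsum, Submodule.mkQ_apply,
      Submodule.Quotient.mk_eq_zero]
    exact Submodule.mem_span_singleton_self v
  have hz : ∀ x ∈ t, l x = 0 := h l hq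
  have hv0 : v = 0 := by
    rw [← hsum]
    exact Finset.sum_eq_zero fun x hx => by rw [hz x hx, zero_smul]
  exact hv hv0

end Horn

section Forms
open MvPolynomial
variable {K : Type*} [Field K] {n : ℕ}

noncomputable def lform (φ : Module.Dual K (Fin n → K)) : MvPolynomial (Fin n) K :=
  ∑ m, MvPolynomial.C (φ (fun j => if m = j then 1 else 0)) * MvPolynomial.X m

lemma lform_homog (φ : Module.Dual K (Fin n → K)) : (lform φ).IsHomogeneous 1 := by
  rw [← mem_homogeneousSubmodule]
  refine Submodule.sum_mem _ fun m _ => ?_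
  rw [mem_homogeneousSubmodule]
  have := (isHomogeneous_C (Fin n) (φ (fun j => if m = j then 1 else 0))).mul
    (isHomogeneous_X K m)
  simpa using this

lemma eval_lform (φ : Module.Dual K (Fin n → K)) (w : Fin n → K) :
    MvPolynomial.eval w (lform φ) = φ w := by
  rw [lform, map_sum]
  rw [LinearMap.pi_apply_eq_sum_univ φ w]
  refine Finset.sum_congr rfl fun m _ => ?_
  rw [eval_mul, eval_C, eval_X, smul_eq_mul, mul_comm]

end Forms


/-- Let `Z = {p_1,...,p_z} ⊆ ℙ^n` be a nonempty finite set of points (given by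
nonzero, pairwise non-proportional vectors) over a field, and let `d ≥ 1` be such that
`|Z ∩ L| ≤ d·dim L + 1` for every nonempty linear subspace `L ⊆ ℙ^n` (a nonzero submodule,
of projective dimension `finrank L - 1`). Then `Z` imposes independent conditions on forms
of degree `d`: the evaluation map `[Sym(V^*)]_d → K^Z` is surjective, i.e.
`dim [Sym(V^*)/I(Z)]_d = |Z|`. -/
theorem stmt10 (K : Type*) [Field K] (n : ℕ) (z : ℕ) (hz : 0 < z)
    (p : Fin z → (Fin (n + 1) → K))
    (hp0 : ∀ i, p i ≠ 0)
    (hdist : ∀ i j, i ≠ j → ∀ c : K, p j ≠ c • p i)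
    (d : ℕ) (hd : 1 ≤ d)
    (hcond : ∀ L : Submodule K (Fin (n + 1) → K), L ≠ ⊥ →
      Set.ncard {i : Fin z | p i ∈ L} ≤ d * (Module.finrank K L - 1) + 1) :
    Function.Surjective (fun f : homogeneousSubmodule (Fin (n + 1)) K d =>
      fun i : Fin z => MvPolynomial.eval (p i) (f : MvPolynomial (Fin (n + 1)) K)) := by
  classical
  have key : ∀ i : Fin z, ∃ F : MvPolynomial (Fin (n + 1)) K,
      F ∈ homogeneousSubmodule (Fin (n + 1)) K d ∧
      (∀ j : Fin z, j ≠ i → MvPolynomial.eval (p j) F = 0) ∧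
      MvPolynomial.eval (p i) F ≠ 0 := by
    intro i
    set s : Finset (Fin z) := Finset.univ.erase i with hs
    have hhyp : ∀ a ⊆ s, a.card ≤ ∑ _k : Fin d, rho p (span K {p i}) a := by
      intro a ha
      set L : Submodule K (Fin (n + 1) → K) := span K (p '' ↑a) ⊔ span K {p i} with hL
      have hiL : p i ∈ L :=
        le_sup_right (α := Submodule K (Fin (n + 1) → K)) (a := span K (p '' ↑a))
          (Submodule.mem_span_singleton_self (p i))
      have hLne : L ≠ ⊥ := fun h => hp0 i (by rw [h] at hiL; simpa using hiL)
      have hfr : rho p (span K {p i}) a + 1 = finrank K L := by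
        have h1 := rho_add p (span K {p i}) a
        rw [finrank_span_singleton (hp0 i)] at h1
        exact h1
      have hcount := hcond L hLne
      have hset : {j : Fin z | p j ∈ L} = ↑(Finset.univ.filter (fun j => p j ∈ L)) := by
        ext x; simp
      rw [hset, Set.ncard_coe_finset] at hcount
      have hia : i ∉ a := fun h => (Finset.mem_erase.1 (ha h)).1 rfl
      have hsub : insert i a ⊆ Finset.univ.filter (fun j => p j ∈ L) := by
        intro x hx
        simp only [Finset.mem_filter, Finset.mem_univ, true_and]
        rcases Finset.mem_insert.1 hx with rfl | hxa
        · exact hiL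
        · exact le_sup_left (α := Submodule K (Fin (n + 1) → K)) (b := span K {p i})
            (Submodule.subset_span ⟨x, hxa, rfl⟩)
      have hle := Finset.card_le_card hsub
      rw [Finset.card_insert_of_notMem hia] at hle
      have hsumc : ∑ _k : Fin d, rho p (span K {p i}) a = d * rho p (span K {p i}) a := by
        rw [Finset.sum_const, Finset.card_univ, Fintype.card_fin, smul_eq_mul]
      have h2 : finrank K ↥L - 1 = rho p (span K {p i}) a := by omega
      rw [h2] at hcount
      omega
    obtain ⟨f, hf⟩ := horn (show 0 < d by omega) p s.card s le_rfl
      (fun _ => span K {p i}) hhyp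
    have hsep : ∀ k : Fin d, ∃ φ : Module.Dual K (Fin (n + 1) → K),
        φ (p i) ≠ 0 ∧ ∀ x ∈ s.filter (fun x => f x = k), φ (p x) = 0 := by
      intro k
      have hnspan : p i ∉ span K (p '' ↑(s.filter (fun x => f x = k))) :=
        nmem_span_of_lindepOn (hp0 i) (hf k)
      obtain ⟨φ, hφ1, hφ2⟩ := Submodule.exists_dual_map_eq_bot_of_notMem hnspan inferInstance
      refine ⟨φ, hφ1, fun x hx => ?_⟩
      have hmem : φ (p x) ∈ (span K (p '' ↑(s.filter (fun x => f x = k)))).map φ :=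
        Submodule.mem_map_of_mem (Submodule.subset_span ⟨x, by simpa using hx, rfl⟩)
      rw [hφ2] at hmem
      exact (Submodule.mem_bot K).1 hmem
    choose φ hφ1 hφ2 using hsep
    refine ⟨∏ k : Fin d, lform (φ k), ?_, ?_, ?_⟩
    · rw [mem_homogeneousSubmodule]
      have := MvPolynomial.IsHomogeneous.prod Finset.univ (fun k => lform (φ k))
        (fun _ => 1) (fun k _ => lform_homog (φ k))
      simpa using this
    · intro j hj
      rw [MvPolynomial.eval_prod]
      refine Finset.prod_eq_zero (Finset.mem_univ (f j)) ?_
      rw [eval_lform]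
      refine hφ2 (f j) j ?_
      simp [hs, hj]
    · rw [MvPolynomial.eval_prod]
      refine Finset.prod_ne_zero_iff.2 fun k _ => ?_
      rw [eval_lform]
      exact hφ1 k
  choose F hFmem hF0 hFi using key
  intro g
  refine ⟨⟨∑ i, (g i * (MvPolynomial.eval (p i) (F i))⁻¹) • F i,
    Submodule.sum_mem _ fun i _ => Submodule.smul_mem _ _ (hFmem i)⟩, ?_⟩
  funext j
  show MvPolynomial.eval (p j) (∑ i, (g i * (MvPolynomial.eval (p i) (F i))⁻¹) • F i) = g j
  rw [map_sum]
  rw [Finset.sum_eq_single j]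
  · rw [MvPolynomial.smul_eval, mul_assoc, inv_mul_cancel₀ (hFi j), mul_one]
  · intro i _ hij
    rw [MvPolynomial.smul_eval, hF0 i j (Ne.symm hij), mul_zero]
  · intro h
    exact absurd (Finset.mem_univ j) h
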